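/- Let K be an infinite field, let M be a matroid on a finite ground set E that is representable over K, and let e be an element not in E. Then there exists a matroid M′ on E ∪ {e} that is representable over K and satisfies: the deletion M′ \ e equals M, the rank of M′ equals the rank of M, and every circuit of M′ that contains e is a spanning set of M′. -/

import Mathlib

universe u

/-- A matroid presented as a finite ground set together with a rank function
satisfying the rank axioms (R1), (R2), (R3). -/
structure RankMatroid (α : Type) [DecidableEq α] where
  E : Finset α
  r : Finset α → ℕ
  r_le_card : ∀ X ⊆ E, r X ≤ X.card
  r_mono : ∀ X Y : Finset α, X ⊆ Y → Y ⊆ E → r X ≤ r Y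
  r_submod : ∀ X Y : Finset α, X ⊆ E → Y ⊆ E →
    r (X ∪ Y) + r (X ∩ Y) ≤ r X + r Y

namespace RankMatroid

variable {α : Type} [DecidableEq α]

/-- A set is independent if its rank equals its cardinality. -/
def Indep (M : RankMatroid α) (X : Finset α) : Prop :=
  X ⊆ M.E ∧ M.r X = X.card

/-- A base is a maximal independent set. -/
def Base (M : RankMatroid α) (B : Finset α) : Prop :=
  M.Indep B ∧ M.r B = M.r M.E

/-- A dependent set. -/
def Dep (M : RankMatroid α) (X : Finset α) : Prop :=
  X ⊆ M.E ∧ M.r X ≠ X.card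

/-- A circuit is a minimal dependent set. -/
def Circuit (M : RankMatroid α) (C : Finset α) : Prop :=
  M.Dep C ∧ ∀ X ⊂ C, M.Indep X

/-- A spanning set. -/
def Spanning (M : RankMatroid α) (X : Finset α) : Prop :=
  X ⊆ M.E ∧ M.r X = M.r M.E

/-- A flat. -/
def Flat (M : RankMatroid α) (X : Finset α) : Prop :=
  X ⊆ M.E ∧ ∀ e ∈ M.E, e ∉ X → M.r X < M.r (insert e X)

/-- A hyperplane is a flat of rank `r(E) - 1`. -/
def Hyperplane (M : RankMatroid α) (X : Finset α) : Prop :=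
  M.Flat X ∧ M.r X + 1 = M.r M.E

/-- `M` is representable over the field `F`: there is a map from the ground type to
an `F`-vector space under which the rank of every subset of the ground set equals the
dimension of the span of its image. -/
def RepOver (M : RankMatroid α) (F : Type u) [Field F] : Prop :=
  ∃ (V : Type u) (_ : AddCommGroup V) (_ : Module F V) (φ : α → V),
    ∀ X ⊆ M.E, M.r X = Module.finrank F (Submodule.span F (φ '' (X : Set α)))

/-- `M` is representable if it is representable over at least one field. -/
def Representable (M : RankMatroid α) : Prop :=
  ∃ (F : Type) (_ : Field F), M.RepOver F

end RankMatroid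

section helpers
open Submodule Module

open Submodule Module

section helpers
set_option linter.unusedSectionVars false
variable {α : Type} [DecidableEq α] {K : Type u} [Field K]
variable {V : Type u} [AddCommGroup V] [Module K V]

lemma fdspan (φ : α → V) (X : Finset α) :
    FiniteDimensional K (span K (φ '' (X : Set α))) :=
  FiniteDimensional.span_of_finite K (X.finite_toSet.image φ)

lemma rk_le_card (φ : α → V) (X : Finset α) :
    finrank K (span K (φ '' (X : Set α))) ≤ X.card := by
  classical
  rw [← Finset.coe_image]
  exact (finrank_span_finset_le_card _).trans Finset.card_image_le

lemma rk_mono (φ : α → V) {X Y : Finset α} (h : X ⊆ Y) :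
    finrank K (span K (φ '' (X : Set α))) ≤ finrank K (span K (φ '' (Y : Set α))) := by
  haveI := fdspan (K := K) φ Y
  exact Submodule.finrank_mono (span_mono (Set.image_mono (by exact_mod_cast h)))

lemma rk_submod (φ : α → V) (X Y : Finset α) :
    finrank K (span K (φ '' ((X ∪ Y : Finset α) : Set α))) +
      finrank K (span K (φ '' ((X ∩ Y : Finset α) : Set α))) ≤
    finrank K (span K (φ '' (X : Set α))) + finrank K (span K (φ '' (Y : Set α))) := by
  haveI := fdspan (K := K) φ X
  haveI := fdspan (K := K) φ Y
  haveI : FiniteDimensional K ↥(span K (φ '' (X : Set α)) ⊔ span K (φ '' (Y : Set α))) := by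
    rw [← span_union, ← Set.image_union]
    exact FiniteDimensional.span_of_finite K ((X.finite_toSet.union Y.finite_toSet).image φ)
  have h1 : span K (φ '' ((X ∪ Y : Finset α) : Set α)) =
      span K (φ '' (X : Set α)) ⊔ span K (φ '' (Y : Set α)) := by
    rw [Finset.coe_union, Set.image_union, span_union]
  have h2 : span K (φ '' ((X ∩ Y : Finset α) : Set α)) ≤
      span K (φ '' (X : Set α)) ⊓ span K (φ '' (Y : Set α)) := by
    rw [Finset.coe_inter]
    refine (span_mono (Set.image_inter_subset φ _ _)).trans (le_inf ?_ ?_)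
    · exact span_mono Set.inter_subset_left
    · exact span_mono Set.inter_subset_right
  rw [h1]
  have := Submodule.finrank_sup_add_finrank_inf_eq
    (span K (φ '' (X : Set α))) (span K (φ '' (Y : Set α)))
  have h3 : finrank K (span K (φ '' ((X ∩ Y : Finset α) : Set α))) ≤
      finrank K ((span K (φ '' (X : Set α)) ⊓ span K (φ '' (Y : Set α)) : Submodule K V)) :=
    Submodule.finrank_mono h2
  omega

end helpers

open Submodule Module in
set_option maxHeartbeats 1000000 in
/-- Every matroid representable over an infinite field `K` has a free extension by a new
element `e` that is again representable over `K`: the extension deletes back to `M`, has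
the same rank as `M`, and every circuit through `e` is spanning. -/
theorem free_extension_representable {α : Type} [DecidableEq α]
    (K : Type u) [Field K] (hK : Infinite K)
    (M : RankMatroid α) (hM : M.RepOver K) (e : α) (he : e ∉ M.E) :
    ∃ M' : RankMatroid α,
      M'.E = insert e M.E ∧
      M'.RepOver K ∧
      (∀ X ⊆ M.E, M'.r X = M.r X) ∧
      M'.r M'.E = M.r M.E ∧
      (∀ C, M'.Circuit C → e ∈ C → M'.Spanning C) := by
  classical
  haveI := hK
  obtain ⟨V, _, _, φ, hφ⟩ := hM
  set W : Submodule K V := span K (φ '' (M.E : Set α)) with hW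
  haveI : FiniteDimensional K W := fdspan φ M.E
  set bad : Finset (Finset α) := M.E.powerset.filter
    (fun X => finrank K (span K (φ '' (X : Set α))) < finrank K W) with hbad
  set s : Finset (Subspace K W) := bad.image
    (fun X : Finset α => (span K (φ '' (↑X : Set α))).comap W.subtype) with hs
  have htop : ⊤ ∉ s := by
    simp only [hs, Finset.mem_image, not_exists]
    rintro X ⟨hX, hXtop⟩
    simp only [hbad, Finset.mem_filter, Finset.mem_powerset] at hX
    have h1 : W ≤ span K (φ '' (X : Set α)) := Submodule.comap_subtype_eq_top.mp hXtop
    haveI := fdspan (K := K) φ X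
    have h2 : finrank K W ≤ finrank K (span K (φ '' (X : Set α))) := Submodule.finrank_mono h1
    omega
  have hne := Subspace.biUnion_ne_univ_of_top_notMem htop
  rw [Set.ne_univ_iff_exists_notMem] at hne
  obtain ⟨w, hw⟩ := hne
  simp only [Set.mem_iUnion, not_exists] at hw
  set v : V := (w : V) with hvdef
  have hvW : v ∈ W := w.2
  have hv : ∀ X ⊆ M.E, M.r X < M.r M.E → v ∉ span K (φ '' (X : Set α)) := by
    intro X hXE hlt hvmem
    have hXb : X ∈ bad := by
      simp only [hbad, Finset.mem_filter, Finset.mem_powerset]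
      refine ⟨hXE, ?_⟩
      rw [← hφ X hXE]
      have : M.r M.E = finrank K W := hφ M.E (le_refl _)
      omega
    exact hw _ (Finset.mem_image_of_mem _ hXb) (by simpa [Submodule.mem_comap] using hvmem)
  set φ' : α → V := Function.update φ e v with hφ'd
  have hupd : φ' e = v := Function.update_self e v φ
  have hagree : ∀ X : Finset α, X ⊆ M.E → φ' '' (X : Set α) = φ '' (X : Set α) := by
    intro X hX
    apply Set.image_congr
    intro a ha
    have hae : a ≠ e := fun h => he (hX (by simpa [h] using ha))
    simp [hφ'd, Function.update_of_ne hae]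
  set M' : RankMatroid α :=
    { E := insert e M.E
      r := fun X => finrank K (span K (φ' '' (X : Set α)))
      r_le_card := fun X _ => rk_le_card φ' X
      r_mono := fun X Y h _ => rk_mono φ' h
      r_submod := fun X Y _ _ => rk_submod φ' X Y } with hM'
  have hrX : ∀ X ⊆ M.E, M'.r X = M.r X := by
    intro X hX
    show finrank K (span K (φ' '' (X : Set α))) = M.r X
    rw [hagree X hX]
    exact (hφ X hX).symm
  have hrE : M'.r M'.E = M.r M.E := by
    show finrank K (span K (φ' '' ((insert e M.E : Finset α) : Set α))) = M.r M.E
    rw [Finset.coe_insert, Set.image_insert_eq, hupd, hagree M.E (le_refl _),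
      span_insert_eq_span hvW, ← hW]
    exact (hφ M.E (le_refl _)).symm
  have hrep : M'.RepOver K := by
    refine ⟨V, ‹_›, ‹_›, φ', ?_⟩
    intro X hX
    rfl
  refine ⟨M', rfl, hrep, hrX, hrE, ?_⟩
  rintro C ⟨⟨hCE, hCr⟩, hmin⟩ heC
  set X := C.erase e with hXdef
  have hXC : X ⊂ C := Finset.erase_ssubset heC
  obtain ⟨-, hXind⟩ := hmin X hXC
  have hXE : X ⊆ M.E := by
    intro a ha
    have := hCE (Finset.mem_of_mem_erase ha)
    rcases Finset.mem_insert.mp this with h | h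
    · exact absurd h (Finset.ne_of_mem_erase ha)
    · exact h
  have hcard : X.card + 1 = C.card := Finset.card_erase_add_one heC
  have hmono : M'.r X ≤ M'.r C := rk_mono φ' (Finset.erase_subset e C)
  have hle : M'.r C ≤ C.card := rk_le_card φ' C
  have hrCX : M'.r C = M'.r X := by omega
  -- show v ∈ span of φ '' X
  have hCins : φ' '' (C : Set α) = insert v (φ '' (X : Set α)) := by
    conv_lhs => rw [← Finset.insert_erase heC]
    rw [Finset.coe_insert, Set.image_insert_eq, hupd, hagree X hXE]
  haveI : FiniteDimensional K (span K (insert v (φ '' (X : Set α)))) :=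
    FiniteDimensional.span_of_finite K ((X.finite_toSet.image φ).insert v)
  have hfr : finrank K (span K (φ '' (X : Set α)))
      = finrank K (span K (insert v (φ '' (X : Set α)))) := by
    have h1 : M'.r C = finrank K (span K (insert v (φ '' (X : Set α)))) := by
      show finrank K (span K (φ' '' (C : Set α))) = _
      rw [hCins]
    have h2 : M'.r X = finrank K (span K (φ '' (X : Set α))) := by
      show finrank K (span K (φ' '' (X : Set α))) = _
      rw [hagree X hXE]
    omega
  have heqspan : span K (φ '' (X : Set α)) = span K (insert v (φ '' (X : Set α))) :=
    Submodule.eq_of_le_of_finrank_eq (span_mono (Set.subset_insert _ _)) hfr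
  have hvmem : v ∈ span K (φ '' (X : Set α)) := by
    rw [heqspan]
    exact subset_span (Set.mem_insert _ _)
  have hrXE : M.r X = M.r M.E := by
    by_contra hne'
    have hlt : M.r X < M.r M.E :=
      lt_of_le_of_ne (M.r_mono X M.E hXE (le_refl _)) hne'
    exact hv X hXE hlt hvmem
  refine ⟨hCE, ?_⟩
  rw [hrCX, hrX X hXE, hrXE, ← hrE]
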